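/- Let G be a finite nonempty connected simple graph and let G' be the graph obtained from G by adding one new vertex adjacent to every vertex of G. Then the connected chromatic number of G' equals χ(G) + 1, i.e., χ_c(G') = χ(G) + 1. -/

import Mathlib

open SimpleGraph

/-- One step of the greedy coloring algorithm: color the vertex `w` with the smallest
positive integer not already used on one of its (already colored) neighbours.
Color `0` means "not yet colored". -/
noncomputable def greedyStep {V : Type*} [DecidableEq V] (G : SimpleGraph V)
    (f : V → ℕ) (w : V) : V → ℕ :=
  Function.update f w (sInf {n : ℕ | 0 < n ∧ ∀ z, G.Adj w z → f z ≠ n})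

/-- The coloring obtained by greedily coloring the vertices of the list `l` in order,
starting from the partial coloring `f₀`. -/
noncomputable def greedyFrom {V : Type*} [DecidableEq V] (G : SimpleGraph V)
    (f₀ : V → ℕ) (l : List V) : V → ℕ :=
  l.foldl (greedyStep G) f₀

/-- The greedy coloring of the ordering `l` (all vertices initially uncolored). -/
noncomputable def greedy {V : Type*} [DecidableEq V] (G : SimpleGraph V)
    (l : List V) : V → ℕ :=
  greedyFrom G (fun _ => 0) l

/-- `l` is a connected ordering of the vertices of `G`: it lists every vertex exactly once,
and every vertex other than the first has a neighbour occurring earlier in the list. -/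
def IsConnectedOrder {V : Type*} (G : SimpleGraph V) (l : List V) : Prop :=
  l.Nodup ∧ (∀ w : V, w ∈ l) ∧
    ∀ i : Fin l.length, 0 < (i : ℕ) →
      ∃ j : Fin l.length, (j : ℕ) < (i : ℕ) ∧ G.Adj (l.get i) (l.get j)

/-- `f` is a connected greedy coloring (CGC) of `G`. -/
def IsCGC {V : Type*} [DecidableEq V] (G : SimpleGraph V) (f : V → ℕ) : Prop :=
  ∃ l : List V, IsConnectedOrder G l ∧ f = greedy G l

/-- `f` is an `(x, α)`-connected greedy coloring of `G`: it is obtained from a connected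
ordering starting at `x` by coloring `x` with `α` and then coloring each subsequent
vertex with the smallest positive integer not appearing on its already-colored
neighbours. -/
def IsCGCFrom {V : Type*} [DecidableEq V] (G : SimpleGraph V) (x : V) (α : ℕ)
    (f : V → ℕ) : Prop :=
  ∃ l : List V, IsConnectedOrder G (x :: l) ∧
    f = greedyFrom G (Function.update (fun _ => 0) x α) l

/-- `f` uses exactly `k` colors. -/
def UsesColors {V : Type*} (f : V → ℕ) (k : ℕ) : Prop :=
  ∃ s : Finset ℕ, (∀ w, f w ∈ s) ∧ (∀ c ∈ s, ∃ w, f w = c) ∧ s.card = k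

/-- The connected chromatic number of `G`: the least `k` such that some connected greedy
coloring of `G` only uses colors in `{1, …, k}`. -/
noncomputable def connChrom {V : Type*} [DecidableEq V] (G : SimpleGraph V) : ℕ :=
  sInf {k | ∃ f, IsCGC G f ∧ ∀ w, f w ≤ k}

/-- The cone over `G`: the graph obtained from `G` by adding one new vertex (`none`)
adjacent to every vertex of `G`. -/
def addUniversal {V : Type*} (G : SimpleGraph V) : SimpleGraph (Option V) :=
  SimpleGraph.fromRel (fun a b =>
    (∃ x y, a = some x ∧ b = some y ∧ G.Adj x y) ∨ (a = none ∧ ∃ x, b = some x))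

section AuxLemmas

variable {V : Type*} [DecidableEq V]

/-- The set of colors available at `w` is nonempty. -/
lemma cgc_set_mem_max [Fintype V] (G : SimpleGraph V) (f : V → ℕ) (w : V) :
    (Finset.univ.sup f) + 1 ∈ {n : ℕ | 0 < n ∧ ∀ z, G.Adj w z → f z ≠ n} := by
  refine ⟨Nat.succ_pos _, fun z _ => ?_⟩
  have : f z ≤ Finset.univ.sup f := Finset.le_sup (Finset.mem_univ z)
  omega

lemma cgc_greedyStep_self_mem [Fintype V] (G : SimpleGraph V) (f : V → ℕ) (w : V) :
    greedyStep G f w w ∈ {n : ℕ | 0 < n ∧ ∀ z, G.Adj w z → f z ≠ n} := by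
  rw [greedyStep, Function.update_self]
  exact Nat.sInf_mem ⟨_, cgc_set_mem_max G f w⟩

lemma cgc_greedyStep_le [Fintype V] (G : SimpleGraph V) (f : V → ℕ) (w : V) (m : ℕ)
    (h0 : 0 < m) (h : ∀ z, G.Adj w z → f z ≠ m) : greedyStep G f w w ≤ m := by
  rw [greedyStep, Function.update_self]
  exact Nat.sInf_le ⟨h0, h⟩

lemma cgc_greedyStep_of_ne (G : SimpleGraph V) (f : V → ℕ) {w v : V} (h : v ≠ w) :
    greedyStep G f w v = f v :=
  Function.update_of_ne h _ _

/-- Partial properness: nonzero colors form a proper partial coloring. -/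
def PartialProper {V : Type*} (G : SimpleGraph V) (f : V → ℕ) : Prop :=
  ∀ a b, G.Adj a b → f a ≠ 0 → f b ≠ 0 → f a ≠ f b

lemma cgc_pp_step [Fintype V] (G : SimpleGraph V) {f : V → ℕ}
    (h : PartialProper G f) (w : V) : PartialProper G (greedyStep G f w) := by
  have hm := cgc_greedyStep_self_mem G f w
  intro a b hab ha hb
  by_cases haw : a = w
  · rw [haw] at hab ⊢
    have hbw : b ≠ w := fun e => G.loopless.irrefl w (e ▸ hab)
    rw [cgc_greedyStep_of_ne G f hbw]
    exact Ne.symm (hm.2 b hab)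
  · rw [cgc_greedyStep_of_ne G f haw] at ha ⊢
    by_cases hbw : b = w
    · subst hbw
      exact hm.2 a hab.symm
    · rw [cgc_greedyStep_of_ne G f hbw] at hb ⊢
      exact h a b hab ha hb

lemma cgc_pp_from [Fintype V] (G : SimpleGraph V) :
    ∀ (l : List V) (f : V → ℕ), PartialProper G f → PartialProper G (greedyFrom G f l)
  | [], _, h => h
  | w :: l, f, h => cgc_pp_from G l _ (cgc_pp_step G h w)

lemma cgc_from_ne_zero [Fintype V] (G : SimpleGraph V) :
    ∀ (l : List V) (f : V → ℕ) (w : V), (w ∈ l ∨ f w ≠ 0) → greedyFrom G f l w ≠ 0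
  | [], f, w, h => by
    rcases h with h | h
    · simp at h
    · exact h
  | v :: l, f, w, h => by
    apply cgc_from_ne_zero G l
    by_cases hwv : w = v
    · subst hwv
      have := (cgc_greedyStep_self_mem G f w).1
      omega
    · rw [cgc_greedyStep_of_ne G f hwv]
      rcases h with h | h
      · rcases List.mem_cons.mp h with h | h
        · exact absurd h hwv
        · exact Or.inl h
      · exact Or.inr h

lemma cgc_greedy_proper [Fintype V] (G : SimpleGraph V) {l : List V}
    (h : IsConnectedOrder G l) :
    (∀ w, greedy G l w ≠ 0) ∧ ∀ a b, G.Adj a b → greedy G l a ≠ greedy G l b := by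
  have hpos : ∀ w, greedy G l w ≠ 0 := fun w =>
    cgc_from_ne_zero G l _ w (Or.inl (h.2.1 w))
  refine ⟨hpos, fun a b hab => ?_⟩
  exact cgc_pp_from G l _ (fun a b _ ha _ _ => absurd rfl ha) a b hab (hpos a) (hpos b)

end AuxLemmas

section AddUniv

variable {V : Type*}

lemma addUniversal_adj_some_some {G : SimpleGraph V} {x y : V} :
    (addUniversal G).Adj (some x) (some y) ↔ G.Adj x y := by
  simp only [addUniversal, SimpleGraph.fromRel_adj]
  constructor
  · rintro ⟨hne, h | h⟩
    · rcases h with ⟨a, b, ha, hb, hab⟩ | ⟨h, -⟩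
      · cases ha; cases hb; exact hab
      · exact absurd h (by simp)
    · rcases h with ⟨a, b, ha, hb, hab⟩ | ⟨h, -⟩
      · cases ha; cases hb; exact hab.symm
      · exact absurd h (by simp)
  · intro h
    exact ⟨by simpa using G.ne_of_adj h, Or.inl (Or.inl ⟨x, y, rfl, rfl, h⟩)⟩

lemma addUniversal_adj_some_none {G : SimpleGraph V} {x : V} :
    (addUniversal G).Adj (some x) none := by
  simp [addUniversal, SimpleGraph.fromRel_adj]

lemma addUniversal_adj_none {G : SimpleGraph V} {x : V} :
    (addUniversal G).Adj none (some x) := addUniversal_adj_some_none.symm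

end AddUniv

section Upper

variable {V : Type*} [DecidableEq V] [Fintype V]

lemma cgc_upperAux (G : SimpleGraph V) (c : V → ℕ) :
    ∀ (L : List V) (f : Option V → ℕ),
      f none = 1 →
      (∀ u, f (some u) ≤ c u + 2) →
      (∀ v ∈ L, ∀ u, G.Adj u v → f (some u) ≤ c v + 1) →
      L.Pairwise (fun a b => G.Adj a b → c a < c b) →
      greedyFrom (addUniversal G) f (L.map some) none = 1 ∧
        ∀ u, greedyFrom (addUniversal G) f (L.map some) (some u) ≤ c u + 2
  | [], f, h1, h2, _, _ => ⟨h1, h2⟩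
  | v :: L, f, h1, h2, h3, hp => by
    rw [List.map_cons]
    show greedyFrom (addUniversal G) (greedyStep (addUniversal G) f (some v)) (L.map some) none = 1 ∧ _
    set f' := greedyStep (addUniversal G) f (some v) with hf'
    obtain ⟨hpv, hpL⟩ := List.pairwise_cons.mp hp
    have hmem : c v + 2 ∈ {n : ℕ | 0 < n ∧ ∀ z, (addUniversal G).Adj (some v) z → f z ≠ n} := by
      refine ⟨Nat.succ_pos _, fun z hz => ?_⟩
      match z with
      | none => rw [h1]; omega
      | some u =>
        have hadj : G.Adj u v := (addUniversal_adj_some_some.mp hz).symm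
        have := h3 v List.mem_cons_self u hadj
        omega
    have hf'v : f' (some v) ≤ c v + 2 := by
      rw [hf', greedyStep, Function.update_self]
      exact Nat.sInf_le hmem
    have hf'none : f' none = 1 := by
      rw [hf', cgc_greedyStep_of_ne _ _ (by simp : (none : Option V) ≠ some v)]
      exact h1
    have hf'2 : ∀ u, f' (some u) ≤ c u + 2 := by
      intro u
      by_cases huv : u = v
      · rw [huv]; exact hf'v
      · rw [hf', cgc_greedyStep_of_ne _ _ (by simpa using huv : (some u : Option V) ≠ some v)]
        exact h2 u
    have hf'3 : ∀ w ∈ L, ∀ u, G.Adj u w → f' (some u) ≤ c w + 1 := by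
      intro w hw u hadj
      by_cases huv : u = v
      · subst huv
        have : c u < c w := hpv w hw hadj
        omega
      · rw [hf', cgc_greedyStep_of_ne _ _ (by simpa using huv : (some u : Option V) ≠ some v)]
        exact h3 w (List.mem_cons_of_mem v hw) u hadj
    exact cgc_upperAux G c L f' hf'none hf'2 hf'3 hpL

end Upper

theorem statement0 {V : Type*} [Fintype V] [DecidableEq V] [Nonempty V]
    (G : SimpleGraph V) (hG : G.Connected) :
    (connChrom (addUniversal G) : ℕ∞) = G.chromaticNumber + 1 := by
  classical
  have hcol : G.Colorable G.chromaticNumber.toNat := G.colorable_chromaticNumber_of_fintype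
  set n := G.chromaticNumber.toNat with hndef
  have hne : G.chromaticNumber ≠ ⊤ :=
    SimpleGraph.chromaticNumber_ne_top_iff_exists.mpr ⟨_, G.colorable_of_fintype⟩
  have hcast : (n : ℕ∞) = G.chromaticNumber := ENat.coe_toNat hne
  obtain ⟨C⟩ := hcol
  -- the ordered vertex list of `V`, sorted by color class
  set L : List V := (List.finRange n).flatMap
    (fun i => (Finset.univ.filter (fun v => C v = i)).toList) with hL
  have hmemL : ∀ v : V, v ∈ L := by
    intro v
    rw [hL]
    refine List.mem_flatMap.mpr ⟨C v, List.mem_finRange _, ?_⟩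
    simp
  have hpairL : L.Pairwise (fun a b => a ≠ b ∧ (G.Adj a b → (C a : ℕ) < (C b : ℕ))) := by
    rw [hL, List.pairwise_flatMap]
    constructor
    · intro i _
      apply (Finset.univ.filter (fun v => C v = i)).nodup_toList.pairwise_of_forall_ne
      intro a ha b hb hab
      rw [Finset.mem_toList, Finset.mem_filter] at ha hb
      refine ⟨hab, fun hadj => absurd (ha.2.trans hb.2.symm) (C.valid hadj)⟩
    · refine (List.pairwise_lt_finRange n).imp ?_
      intro i j hij x hx y hy
      rw [Finset.mem_toList, Finset.mem_filter] at hx hy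
      have hxy : (C x : ℕ) < (C y : ℕ) := by
        rw [hx.2, hy.2]; exact hij
      exact ⟨fun h => by simp [h] at hxy, fun _ => hxy⟩
  have hpair' : L.Pairwise (fun a b => G.Adj a b → (C a : ℕ) < (C b : ℕ)) :=
    hpairL.imp (fun h => h.2)
  have hnodupL : L.Nodup := hpairL.imp (fun h => h.1)
  -- the connected ordering of the cone
  have hord : IsConnectedOrder (addUniversal G) (none :: L.map some) := by
    refine ⟨?_, ?_, ?_⟩
    · rw [List.nodup_cons]
      exact ⟨by simp, hnodupL.map (Option.some_injective V)⟩
    · intro w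
      match w with
      | none => exact List.mem_cons_self
      | some v => exact List.mem_cons_of_mem _ (List.mem_map_of_mem (f := some) (hmemL v))
    · intro i hi
      refine ⟨⟨0, Nat.succ_pos _⟩, hi, ?_⟩
      obtain ⟨m, hm⟩ : ∃ m, (i : ℕ) = m + 1 := ⟨(i : ℕ) - 1, by omega⟩
      have hlen : m < (L.map some).length := by
        have := i.isLt
        simp only [List.length_cons] at this
        omega
      have hgi : (none :: L.map some).get i = (L.map some).get ⟨m, hlen⟩ := by
        have hieq : i = ⟨m + 1, by simpa using hlen⟩ := Fin.ext hm
        rw [hieq, List.get_cons_succ]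
      rw [hgi]
      have : (L.map some).get ⟨m, hlen⟩ = some (L.get ⟨m, by simpa using hlen⟩) :=
        by simp
      rw [this]
      exact addUniversal_adj_some_none
  -- the greedy coloring along this ordering
  set f : Option V → ℕ := greedy (addUniversal G) (none :: L.map some) with hfdef
  have hstep0 : ∀ w, greedyStep (addUniversal G) (fun _ => 0) none w =
      Function.update (fun _ => 0) none 1 w := by
    intro w
    by_cases hw : w = none
    · subst hw
      rw [Function.update_self]
      refine le_antisymm (cgc_greedyStep_le _ _ _ 1 Nat.one_pos (fun z _ => by simp)) ?_
      have := (cgc_greedyStep_self_mem (addUniversal G) (fun _ => 0) none).1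
      omega
    · rw [cgc_greedyStep_of_ne _ _ hw, Function.update_of_ne hw]
  have hf : f = greedyFrom (addUniversal G) (Function.update (fun _ => 0) none 1)
      (L.map some) := by
    rw [hfdef]
    show greedyFrom (addUniversal G) (greedyStep (addUniversal G) (fun _ => 0) none)
      (L.map some) = _
    rw [funext hstep0]
  have key := cgc_upperAux G (fun v => (C v : ℕ)) L
    (Function.update (fun _ => 0) none 1)
    (Function.update_self _ _ _)
    (fun u => by rw [Function.update_of_ne (by simp)]; omega)
    (fun v _ u _ => by rw [Function.update_of_ne (by simp)]; omega)
    hpair'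
  have hbound : ∀ w, f w ≤ n + 1 := by
    intro w
    rw [hf]
    match w with
    | none => rw [key.1]; omega
    | some u =>
      have h1 : _ ≤ (C u : ℕ) + 2 := key.2 u
      have h2 : (C u : ℕ) < n := (C u).isLt
      omega
  have hmemS : n + 1 ∈ {k | ∃ f, IsCGC (addUniversal G) f ∧ ∀ w, f w ≤ k} :=
    ⟨f, ⟨_, hord, hfdef⟩, hbound⟩
  -- lower bound
  have hlow : ∀ k ∈ {k | ∃ f, IsCGC (addUniversal G) f ∧ ∀ w, f w ≤ k}, n + 1 ≤ k := by
    rintro k ⟨g, ⟨l, hordl, rfl⟩, hle⟩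
    obtain ⟨hpos, hproper⟩ := cgc_greedy_proper (addUniversal G) hordl
    set g : Option V → ℕ := greedy (addUniversal G) l with hg
    have hga : ∀ v : V, g (some v) ≠ g none :=
      fun v => hproper _ _ addUniversal_adj_some_none
    have hk2 : 2 ≤ k := by
      have v0 := Classical.arbitrary V
      have h1 := hga v0
      have h2 := hpos (some v0)
      have h3 := hpos none
      have h4 := hle (some v0)
      have h5 := hle none
      omega
    have hcolor : G.Colorable (k - 1) := by
      refine ⟨SimpleGraph.Coloring.mk
        (fun v => ⟨if g (some v) < g none then g (some v) - 1 else g (some v) - 2, ?_⟩) ?_⟩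
      · have h1 := hga v
        have h2 := hpos (some v)
        have h3 := hpos none
        have h4 := hle (some v)
        have h5 := hle none
        split_ifs <;> omega
      · intro v w hadj heq
        simp only [Fin.mk.injEq] at heq
        have h0 : g (some v) ≠ g (some w) :=
          hproper _ _ (addUniversal_adj_some_some.mpr hadj)
        have h1 := hga v
        have h1' := hga w
        have h2 := hpos (some v)
        have h2' := hpos (some w)
        have h3 := hpos none
        split_ifs at heq <;> omega
    have hchrom : (n : ℕ∞) ≤ (k - 1 : ℕ) := hcast ▸ hcolor.chromaticNumber_le
    have : n ≤ k - 1 := Nat.cast_le.mp hchrom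
    omega
  have hconn : connChrom (addUniversal G) = n + 1 :=
    le_antisymm (Nat.sInf_le hmemS) (le_csInf ⟨_, hmemS⟩ hlow)
  rw [hconn, ← hcast]
  push_cast
  ring
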